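/- Let a finite oriented metric graph be given, and let q = (q_e) be a family of functions, each continuously differentiable on [0, ℓ e]. For a vertex v, let d_v = #{e | src e = v} + #{e | dst e = v} be its degree. Then for every vertex v, ⟦q⟧_v² ≤ d_v · ( ∑_{e : dst e = v} T_e + ∑_{e : src e = v} T_e ), where T_e = (1/(ℓ e)) ∫₀^{ℓ e} q_e² ds + 2 (∫₀^{ℓ e} q_e² ds)^{1/2} (∫₀^{ℓ e} q_e'² ds)^{1/2}. In particular, a family that is edgewise H¹ has finite, controlled jumps at all vertices, so the broken space H¹(ℰ) is contained in H(div; 𝒢). -/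

import Mathlib

open MeasureTheory intervalIntegral
open scoped BigOperators

/-- The degree of a vertex `v`: `#{e | src e = v} + #{e | dst e = v}`. -/
def degree {E V : Type*} [Fintype E] [DecidableEq V] (src dst : E → V) (v : V) : ℕ :=
  (Finset.univ.filter fun e => src e = v).card +
    (Finset.univ.filter fun e => dst e = v).card

/-- The jump of a family `q = (q_e)` of functions on the edges at a vertex `v`:
`⟦q⟧_v = ∑_{e : dst e = v} q_e (ℓ e) − ∑_{e : src e = v} q_e 0`. -/
def jump {E V : Type*} [Fintype E] [DecidableEq V] (src dst : E → V) (ℓ : E → ℝ)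
    (q : E → ℝ → ℝ) (v : V) : ℝ :=
  (∑ e ∈ Finset.univ.filter fun e => dst e = v, q e (ℓ e)) -
    ∑ e ∈ Finset.univ.filter fun e => src e = v, q e 0

/-- Cauchy–Schwarz for interval integrals of continuous functions. -/
private lemma cs_integral {L : ℝ} (hL : 0 ≤ L) {f g : ℝ → ℝ}
    (hf : ContinuousOn f (Set.Icc 0 L)) (hg : ContinuousOn g (Set.Icc 0 L)) :
    ∫ s in (0:ℝ)..L, |f s| * |g s|
      ≤ Real.sqrt (∫ s in (0:ℝ)..L, f s ^ 2) * Real.sqrt (∫ s in (0:ℝ)..L, g s ^ 2) := by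
  have hpq : (2:ℝ).HolderConjugate 2 := Real.holderConjugate_iff.mpr ⟨one_lt_two, by norm_num⟩
  set μ : Measure ℝ := volume.restrict (Set.Ioc 0 L) with hμ
  haveI : IsFiniteMeasure μ := by
    constructor
    rw [hμ, Measure.restrict_apply_univ]
    exact measure_Ioc_lt_top
  obtain ⟨Cf, hCf⟩ := isCompact_Icc.exists_bound_of_continuousOn hf
  obtain ⟨Cg, hCg⟩ := isCompact_Icc.exists_bound_of_continuousOn hg
  have hmf : AEStronglyMeasurable (fun s => |f s|) μ :=
    ((hf.abs).mono Set.Ioc_subset_Icc_self).aestronglyMeasurable measurableSet_Ioc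
  have hmg : AEStronglyMeasurable (fun s => |g s|) μ :=
    ((hg.abs).mono Set.Ioc_subset_Icc_self).aestronglyMeasurable measurableSet_Ioc
  have hLf : MemLp (fun s => |f s|) (ENNReal.ofReal 2) μ := by
    refine MemLp.of_bound hmf Cf ?_
    rw [hμ]
    refine (ae_restrict_iff' measurableSet_Ioc).2 (Filter.Eventually.of_forall fun x hx => ?_)
    simpa using hCf x (Set.Ioc_subset_Icc_self hx)
  have hLg : MemLp (fun s => |g s|) (ENNReal.ofReal 2) μ := by
    refine MemLp.of_bound hmg Cg ?_
    rw [hμ]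
    refine (ae_restrict_iff' measurableSet_Ioc).2 (Filter.Eventually.of_forall fun x hx => ?_)
    simpa using hCg x (Set.Ioc_subset_Icc_self hx)
  have key := integral_mul_le_Lp_mul_Lq_of_nonneg (μ := μ) hpq
    (Filter.Eventually.of_forall fun x => abs_nonneg (f x))
    (Filter.Eventually.of_forall fun x => abs_nonneg (g x)) hLf hLg
  have habs : ∀ x : ℝ, |x| ^ (2:ℝ) = x ^ 2 := by
    intro x
    rw [show (2:ℝ) = ((2:ℕ):ℝ) by norm_num, Real.rpow_natCast, sq_abs]
  rw [intervalIntegral.integral_of_le hL, intervalIntegral.integral_of_le hL,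
    intervalIntegral.integral_of_le hL]
  calc ∫ s in Set.Ioc 0 L, |f s| * |g s|
      ≤ (∫ a, |f a| ^ (2:ℝ) ∂μ) ^ ((1:ℝ)/2) * (∫ a, |g a| ^ (2:ℝ) ∂μ) ^ ((1:ℝ)/2) := key
    _ = Real.sqrt (∫ s in Set.Ioc 0 L, f s ^ 2) * Real.sqrt (∫ s in Set.Ioc 0 L, g s ^ 2) := by
        simp only [habs, Real.sqrt_eq_rpow, hμ]

/-- Trace estimate on a single edge: the square of the value at any point of `[0, L]` is
bounded by `(1/L) ∫ f² + 2 √(∫ f²) √(∫ f'²)`. -/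
private lemma trace_bound {L : ℝ} (hL : 0 < L) {f f' : ℝ → ℝ}
    (hderiv : ∀ s ∈ Set.Icc (0:ℝ) L, HasDerivWithinAt f (f' s) (Set.Icc 0 L) s)
    (hf' : ContinuousOn f' (Set.Icc 0 L)) {t : ℝ} (ht : t ∈ Set.Icc (0:ℝ) L) :
    f t ^ 2 ≤ (1 / L) * (∫ s in (0:ℝ)..L, f s ^ 2)
      + 2 * Real.sqrt (∫ s in (0:ℝ)..L, f s ^ 2)
          * Real.sqrt (∫ s in (0:ℝ)..L, f' s ^ 2) := by
  have hfc : ContinuousOn f (Set.Icc 0 L) := fun s hs => (hderiv s hs).continuousWithinAt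
  have hsq : ContinuousOn (fun s => f s ^ 2) (Set.Icc 0 L) := hfc.pow 2
  obtain ⟨s₀, hs₀, hmin⟩ := isCompact_Icc.exists_isMinOn (Set.nonempty_Icc.2 hL.le) hsq
  have huIcc : Set.uIcc (0:ℝ) L = Set.Icc 0 L := Set.uIcc_of_le hL.le
  have hintsq : IntervalIntegrable (fun s => f s ^ 2) volume 0 L := by
    apply ContinuousOn.intervalIntegrable; rwa [huIcc]
  -- the minimum point bounds the average
  have h1 : f s₀ ^ 2 ≤ (1 / L) * ∫ s in (0:ℝ)..L, f s ^ 2 := by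
    have hconst : (∫ _ in (0:ℝ)..L, f s₀ ^ 2) = L * f s₀ ^ 2 := by
      simp [mul_comm]
    have hle := intervalIntegral.integral_mono_on (μ := volume) hL.le
      (intervalIntegrable_const) hintsq (fun x hx => hmin hx)
    rw [hconst] at hle
    rw [one_div, ← div_eq_inv_mul, le_div_iff₀ hL]
    linarith [hle, mul_comm L (f s₀ ^ 2)]
  -- fundamental theorem of calculus on `[s₀, t]`
  have hsub : Set.uIcc s₀ t ⊆ Set.Icc 0 L := Set.uIcc_subset_Icc hs₀ ht
  have hint2 : IntervalIntegrable (fun s => 2 * f s * f' s) volume s₀ t :=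
    ((continuousOn_const.mul (hfc.mono hsub)).mul (hf'.mono hsub)).intervalIntegrable
  have hkey : (∫ s in s₀..t, 2 * f s * f' s) = f t ^ 2 - f s₀ ^ 2 := by
    apply intervalIntegral.integral_eq_sub_of_hasDeriv_right (hsq.mono hsub) ?_ hint2
    intro x hx
    have hxo : x ∈ Set.Ioo (0:ℝ) L :=
      ⟨lt_of_le_of_lt (le_min hs₀.1 ht.1) hx.1, lt_of_lt_of_le hx.2 (max_le hs₀.2 ht.2)⟩
    have hd : HasDerivAt f (f' x) x :=
      (hderiv x (Set.Ioo_subset_Icc_self hxo)).hasDerivAt (Icc_mem_nhds hxo.1 hxo.2)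
    have h2 := (hd.fun_pow 2).hasDerivWithinAt (s := Set.Ioi x)
    simpa using h2
  -- bound the FTC term by the Cauchy-Schwarz estimate on the whole edge
  have hintabs : IntervalIntegrable (fun s => |2 * f s * f' s|) volume 0 L := by
    apply ContinuousOn.intervalIntegrable
    rw [huIcc]
    exact ((continuousOn_const.mul hfc).mul hf').abs
  have hIsub : Set.uIoc s₀ t ⊆ Set.uIoc 0 L :=
    Set.uIoc_subset_uIoc_of_uIcc_subset_uIcc (by rw [huIcc]; exact hsub)
  have hnonneg : (0:ℝ → ℝ) ≤ᵐ[volume.restrict (Set.uIoc (0:ℝ) L)]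
      fun s => |2 * f s * f' s| :=
    Filter.Eventually.of_forall fun x => abs_nonneg _
  have habs1 : |∫ s in s₀..t, 2 * f s * f' s| ≤ ∫ s in (0:ℝ)..L, |2 * f s * f' s| := by
    have e1 : |∫ s in s₀..t, 2 * f s * f' s| ≤ |(∫ s in s₀..t, |2 * f s * f' s|)| := by
      simpa only [Real.norm_eq_abs] using
        intervalIntegral.norm_integral_le_abs_integral_norm
          (f := fun s => 2 * f s * f' s) (a := s₀) (b := t) (μ := volume)
    have e2 : |(∫ s in s₀..t, |2 * f s * f' s|)| ≤ |(∫ s in (0:ℝ)..L, |2 * f s * f' s|)| :=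
      intervalIntegral.abs_integral_mono_interval hIsub hnonneg hintabs
    have e3 : |(∫ s in (0:ℝ)..L, |2 * f s * f' s|)| = ∫ s in (0:ℝ)..L, |2 * f s * f' s| :=
      abs_of_nonneg (intervalIntegral.integral_nonneg hL.le fun x _ => abs_nonneg _)
    calc |∫ s in s₀..t, 2 * f s * f' s| ≤ _ := e1
      _ ≤ _ := e2
      _ = _ := e3
  have habs2 : (∫ s in (0:ℝ)..L, |2 * f s * f' s|)
      ≤ 2 * Real.sqrt (∫ s in (0:ℝ)..L, f s ^ 2) * Real.sqrt (∫ s in (0:ℝ)..L, f' s ^ 2) := by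
    have e4 : (∫ s in (0:ℝ)..L, |2 * f s * f' s|)
        = 2 * ∫ s in (0:ℝ)..L, |f s| * |f' s| := by
      rw [← intervalIntegral.integral_const_mul]
      congr 1; funext s
      rw [abs_mul, abs_mul]
      simp [mul_assoc]
    rw [e4, mul_assoc]
    have := cs_integral hL.le hfc hf'
    nlinarith [this]
  have hft : f t ^ 2 = f s₀ ^ 2 + ∫ s in s₀..t, 2 * f s * f' s := by linarith [hkey]
  calc f t ^ 2 ≤ f s₀ ^ 2 + |∫ s in s₀..t, 2 * f s * f' s| := by
        rw [hft]; gcongr; exact le_abs_self _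
    _ ≤ (1 / L) * (∫ s in (0:ℝ)..L, f s ^ 2)
        + 2 * Real.sqrt (∫ s in (0:ℝ)..L, f s ^ 2)
            * Real.sqrt (∫ s in (0:ℝ)..L, f' s ^ 2) :=
      add_le_add h1 (habs1.trans habs2)

/-- Control of vertex jumps by edgewise `H¹` data: for an edgewise continuously
differentiable family `q` on a finite oriented metric graph, the jump at every vertex
`v` satisfies `⟦q⟧_v² ≤ d_v (∑_{e : dst e = v} T_e + ∑_{e : src e = v} T_e)` with
`T_e = (1/ℓ e) ∫₀^{ℓ e} q_e² + 2 (∫₀^{ℓ e} q_e²)^{1/2} (∫₀^{ℓ e} (q_e')²)^{1/2}`;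
hence the broken space `H¹(ℰ)` is contained in `H(div; 𝒢)`. -/
theorem jump_bound
    {E V : Type*} [Fintype E] [Fintype V] [DecidableEq V]
    (src dst : E → V) (ℓ : E → ℝ) (hℓ : ∀ e, 0 < ℓ e)
    (q q' : E → ℝ → ℝ)
    (hq : ∀ e, ∀ s ∈ Set.Icc (0:ℝ) (ℓ e),
      HasDerivWithinAt (q e) (q' e s) (Set.Icc (0:ℝ) (ℓ e)) s)
    (hq' : ∀ e, ContinuousOn (q' e) (Set.Icc (0:ℝ) (ℓ e))) :
    ∀ v : V, (jump src dst ℓ q v) ^ 2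
      ≤ (degree src dst v : ℝ) *
        ((∑ e ∈ Finset.univ.filter fun e => dst e = v,
            ((1 / ℓ e) * (∫ s in (0:ℝ)..(ℓ e), (q e s) ^ 2)
              + 2 * Real.sqrt (∫ s in (0:ℝ)..(ℓ e), (q e s) ^ 2)
                  * Real.sqrt (∫ s in (0:ℝ)..(ℓ e), (q' e s) ^ 2)))
          + ∑ e ∈ Finset.univ.filter fun e => src e = v,
            ((1 / ℓ e) * (∫ s in (0:ℝ)..(ℓ e), (q e s) ^ 2)
              + 2 * Real.sqrt (∫ s in (0:ℝ)..(ℓ e), (q e s) ^ 2)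
                  * Real.sqrt (∫ s in (0:ℝ)..(ℓ e), (q' e s) ^ 2))) := by
  intro v
  classical
  set A := Finset.univ.filter fun e => dst e = v with hA
  set B := Finset.univ.filter fun e => src e = v with hB
  set T : E → ℝ := fun e =>
    (1 / ℓ e) * (∫ s in (0:ℝ)..(ℓ e), (q e s) ^ 2)
      + 2 * Real.sqrt (∫ s in (0:ℝ)..(ℓ e), (q e s) ^ 2)
          * Real.sqrt (∫ s in (0:ℝ)..(ℓ e), (q' e s) ^ 2) with hT
  set F : E ⊕ E → ℝ := Sum.elim (fun e => q e (ℓ e)) (fun e => -(q e 0)) with hF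
  have hjump : jump src dst ℓ q v = ∑ i ∈ A.disjSum B, F i := by
    rw [Finset.sum_disjSum]
    simp [jump, F, hA, hB, sub_eq_add_neg]
  have hCS := sq_sum_le_card_mul_sum_sq (s := A.disjSum B) (f := F)
  rw [Finset.card_disjSum] at hCS
  have hsumsq : ∑ i ∈ A.disjSum B, F i ^ 2
      = (∑ e ∈ A, q e (ℓ e) ^ 2) + ∑ e ∈ B, q e 0 ^ 2 := by
    rw [Finset.sum_disjSum]; simp [F]
  have htrace : (∑ e ∈ A, q e (ℓ e) ^ 2) + ∑ e ∈ B, q e 0 ^ 2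
      ≤ (∑ e ∈ A, T e) + ∑ e ∈ B, T e := by
    gcongr with e he e he
    · exact trace_bound (hℓ e) (hq e) (hq' e) (Set.right_mem_Icc.2 (hℓ e).le)
    · exact trace_bound (hℓ e) (hq e) (hq' e) (Set.left_mem_Icc.2 (hℓ e).le)
  have hdeg : (degree src dst v : ℝ) = (A.card : ℝ) + (B.card : ℝ) := by
    simp [degree, hA, hB]; push_cast; ring
  calc (jump src dst ℓ q v) ^ 2 = (∑ i ∈ A.disjSum B, F i) ^ 2 := by rw [hjump]
    _ ≤ ((A.card + B.card : ℕ) : ℝ) * ∑ i ∈ A.disjSum B, F i ^ 2 := hCS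
    _ ≤ ((A.card + B.card : ℕ) : ℝ) * ((∑ e ∈ A, T e) + ∑ e ∈ B, T e) := by
        rw [hsumsq]
        exact mul_le_mul_of_nonneg_left htrace (by positivity)
    _ = (degree src dst v : ℝ) * ((∑ e ∈ A, T e) + ∑ e ∈ B, T e) := by
        rw [hdeg]; push_cast; ring
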